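/- Let Γ be a Gamma(τa, 1) random variable with τa > 0 and, conditionally on Γ, let Λ be Gaussian with mean γ̄a + μΓ and variance σ²Γ. Then E[Γ | Λ = λ] = (|λ − γ̄a| / √(2σ² + μ²)) · K_{τa + 1/2}(σ^{−2}|λ − γ̄a|√(2σ² + μ²)) / K_{τa − 1/2}(σ^{−2}|λ − γ̄a|√(2σ² + μ²)), whenever λ ≠ γ̄a. -/

import Mathlib

open MeasureTheory Real Set

noncomputable def besselK (ν x : ℝ) : ℝ :=
  ∫ t in Ioi (0 : ℝ), Real.exp (-x * Real.cosh t) * Real.cosh (ν * t)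

/-- Joint density of `(Λ, Γ)` at `(λ, g)` in the hierarchical model
`Γ ~ Gamma(τa, 1)`, `Λ | Γ = g ~ N(γ̄a + μg, σ²g)`. -/
noncomputable def jointDensity (τ a γbar μ σ lam g : ℝ) : ℝ :=
  Real.exp (-(lam - γbar * a - μ * g) ^ 2 / (2 * σ ^ 2 * g)) /
      Real.sqrt (2 * π * σ ^ 2 * g) *
    (g ^ (τ * a - 1) * Real.exp (-g) / Real.Gamma (τ * a))

/-- The conditional expectation `E[Γ | Λ = λ]`, computed as
`∫ g π(λ|g)π(g) dg / ∫ π(λ|g)π(g) dg`. -/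
noncomputable def condMeanGamma (τ a γbar μ σ lam : ℝ) : ℝ :=
  (∫ g in Ioi (0 : ℝ), g * jointDensity τ a γbar μ σ lam g) /
    ∫ g in Ioi (0 : ℝ), jointDensity τ a γbar μ σ lam g

lemma sq_div_four_le_cosh (t : ℝ) : t ^ 2 / 4 ≤ Real.cosh t := by
  rw [← Real.cosh_abs, Real.cosh_eq]
  nlinarith [Real.quadratic_le_exp_of_nonneg (abs_nonneg t), Real.exp_pos (-|t|),
    sq_abs t, abs_nonneg t]

lemma integrable_exp_mul_sub_sq {b c : ℝ} (hb : 0 < b) :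
    Integrable fun t : ℝ => Real.exp (c * t - b * t ^ 2) := by
  have h := ((integrable_exp_neg_mul_sq hb).comp_sub_right (c / (2 * b))).const_mul
    (Real.exp (c ^ 2 / (4 * b)))
  refine h.congr (ae_of_all _ fun t => ?_)
  simp only []
  rw [← Real.exp_add]
  congr 1
  field_simp
  ring

lemma integrable_exp_mul_sub_cosh {x : ℝ} (ν : ℝ) (hx : 0 < x) :
    Integrable fun t : ℝ => Real.exp (ν * t - x * Real.cosh t) := by
  refine (integrable_exp_mul_sub_sq (b := x / 4) (c := ν) (by linarith)).mono
    (Continuous.aestronglyMeasurable (by continuity)) (ae_of_all _ fun t => ?_)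
  simp only [norm_eq_abs, abs_exp, Real.exp_le_exp]
  nlinarith [sq_div_four_le_cosh t]

lemma integral_exp_mul_sub_cosh {x : ℝ} (ν : ℝ) (hx : 0 < x) :
    ∫ t : ℝ, Real.exp (ν * t - x * Real.cosh t) = 2 * besselK ν x := by
  have hint : ∀ c : ℝ, IntegrableOn (fun t : ℝ => Real.exp (c * t - x * Real.cosh t)) (Ioi 0) :=
    fun c => (integrable_exp_mul_sub_cosh c hx).integrableOn
  have hsplit : ∫ t : ℝ, Real.exp (ν * t - x * Real.cosh t)
      = (∫ t in Iic (0:ℝ), Real.exp (ν * t - x * Real.cosh t))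
        + ∫ t in Ioi (0:ℝ), Real.exp (ν * t - x * Real.cosh t) := by
    rw [← integral_add_compl measurableSet_Iic (integrable_exp_mul_sub_cosh ν hx), compl_Iic]
  have hrefl : (∫ t in Iic (0:ℝ), Real.exp (ν * t - x * Real.cosh t))
      = ∫ t in Ioi (0:ℝ), Real.exp (-ν * t - x * Real.cosh t) := by
    rw [show Iic (0:ℝ) = Iic (-0) by norm_num, ← integral_comp_neg_Ioi]
    congr 1
    ext t
    rw [Real.cosh_neg]
    ring_nf
  rw [hsplit, hrefl, besselK, ← integral_add (hint (-ν)) (hint ν), ← MeasureTheory.integral_const_mul]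
  congr 1
  ext t
  rw [Real.cosh_eq, Real.cosh_eq]
  rw [show -ν * t - x * ((Real.exp t + Real.exp (-t))/2) =
      (ν * -t) + (- x * ((Real.exp t + Real.exp (-t))/2)) by ring,
    show ν * t - x * ((Real.exp t + Real.exp (-t))/2) =
      (ν * t) + (- x * ((Real.exp t + Real.exp (-t))/2)) by ring,
    Real.exp_add, Real.exp_add]
  rw [show ν * -t = -(ν*t) by ring]
  ring

lemma integral_rpow_exp_eq {α β : ℝ} (ν : ℝ) (hα : 0 < α) (hβ : 0 < β) :
    ∫ g in Ioi (0:ℝ), g ^ (ν - 1) * Real.exp (-(α * g + β / g))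
      = Real.sqrt (β / α) ^ ν
          * ∫ t : ℝ, Real.exp (ν * t - 2 * Real.sqrt (α * β) * Real.cosh t) := by
  set s₀ := Real.sqrt (β / α) with hs₀def
  have hs₀ : 0 < s₀ := Real.sqrt_pos.2 (div_pos hβ hα)
  have hkey1 : α * s₀ = Real.sqrt (α * β) := by
    rw [show α * β = (α * s₀) ^ 2 by
      rw [mul_pow, hs₀def, Real.sq_sqrt (div_pos hβ hα).le]; field_simp]
    exact (Real.sqrt_sq (by positivity)).symm
  have hkey2 : β / s₀ = Real.sqrt (α * β) := by
    rw [show α * β = (β / s₀) ^ 2 by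
      rw [div_pow, hs₀def, Real.sq_sqrt (div_pos hβ hα).le]; field_simp]
    exact (Real.sqrt_sq (by positivity)).symm
  have himg : (fun t : ℝ => s₀ * Real.exp t) '' univ = Ioi 0 := by
    ext y
    constructor
    · rintro ⟨t, -, rfl⟩
      exact mul_pos hs₀ (Real.exp_pos t)
    · intro hy
      refine ⟨Real.log (y / s₀), trivial, ?_⟩
      show s₀ * Real.exp (Real.log (y / s₀)) = y
      rw [Real.exp_log (div_pos hy hs₀)]
      field_simp
  have hinj : InjOn (fun t : ℝ => s₀ * Real.exp t) univ := fun t _ u _ h => by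
    simpa [hs₀.ne', Real.exp_eq_exp] using h
  have hderiv : ∀ t ∈ (univ : Set ℝ),
      HasDerivWithinAt (fun t : ℝ => s₀ * Real.exp t) (s₀ * Real.exp t) univ t :=
    fun t _ => ((Real.hasDerivAt_exp t).const_mul s₀).hasDerivWithinAt
  have := integral_image_eq_integral_abs_deriv_smul MeasurableSet.univ hderiv hinj
    (fun g => g ^ (ν - 1) * Real.exp (-(α * g + β / g)))
  rw [himg] at this
  rw [this, setIntegral_univ, ← MeasureTheory.integral_const_mul]
  congr 1
  ext t
  have he : (0:ℝ) < Real.exp t := Real.exp_pos t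
  have hprod : 0 < s₀ * Real.exp t := mul_pos hs₀ he
  rw [smul_eq_mul, abs_of_pos hprod]
  rw [show α * (s₀ * Real.exp t) + β / (s₀ * Real.exp t)
      = 2 * Real.sqrt (α * β) * Real.cosh t by
    rw [Real.cosh_eq]
    have hb : β / (s₀ * Real.exp t) = (β / s₀) * Real.exp (-t) := by
      rw [Real.exp_neg]; field_simp
    rw [hb, hkey2, ← hkey1]
    ring]
  rw [Real.mul_rpow hs₀.le he.le, ← Real.exp_mul,
    show s₀ * Real.exp t * (s₀ ^ (ν - 1) * Real.exp (t * (ν - 1))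
        * Real.exp (-(2 * Real.sqrt (α * β) * Real.cosh t)))
      = (s₀ * s₀ ^ (ν - 1)) * (Real.exp t * Real.exp (t * (ν - 1))
        * Real.exp (-(2 * Real.sqrt (α * β) * Real.cosh t))) by ring,
    ← Real.exp_add, ← Real.exp_add,
    show s₀ * s₀ ^ (ν - 1) = s₀ ^ (1:ℝ) * s₀ ^ (ν - 1) by rw [Real.rpow_one],
    ← Real.rpow_add hs₀]
  ring_nf

lemma integrableOn_besselK_integrand {x : ℝ} (ν : ℝ) (hx : 0 < x) :
    IntegrableOn (fun t : ℝ => Real.exp (-x * Real.cosh t) * Real.cosh (ν * t)) (Ioi 0) := by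
  have h := (((integrable_exp_mul_sub_cosh ν hx).add
    (integrable_exp_mul_sub_cosh (-ν) hx)).div_const 2).integrableOn (s := Ioi (0:ℝ))
  refine h.congr_fun (fun t _ => ?_) measurableSet_Ioi
  simp only [Pi.add_apply]
  rw [Real.cosh_eq (ν * t),
    show ν * t - x * Real.cosh t = -x * Real.cosh t + ν * t by ring,
    show -ν * t - x * Real.cosh t = -x * Real.cosh t + -(ν * t) by ring,
    Real.exp_add, Real.exp_add]
  ring

lemma besselK_pos {x : ℝ} (ν : ℝ) (hx : 0 < x) : 0 < besselK ν x := by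
  rw [besselK]
  have hpos : ∀ t : ℝ, 0 < Real.exp (-x * Real.cosh t) * Real.cosh (ν * t) := fun t =>
    mul_pos (Real.exp_pos _) (lt_of_lt_of_le one_pos (Real.one_le_cosh _))
  refine (setIntegral_pos_iff_support_of_nonneg_ae (ae_of_all _ fun t => (hpos t).le)
    (integrableOn_besselK_integrand ν hx)).2 ?_
  have : Function.support (fun t : ℝ => Real.exp (-x * Real.cosh t) * Real.cosh (ν * t))
      ∩ Ioi 0 = Ioi 0 := by
    rw [inter_eq_right]
    exact fun t _ => (hpos t).ne'
  rw [this, Real.volume_Ioi]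
  exact ENNReal.zero_lt_top

lemma master {α β : ℝ} (ν : ℝ) (hα : 0 < α) (hβ : 0 < β) :
    ∫ g in Ioi (0:ℝ), g ^ (ν - 1) * Real.exp (-(α * g + β / g))
      = Real.sqrt (β / α) ^ ν * (2 * besselK ν (2 * Real.sqrt (α * β))) := by
  rw [integral_rpow_exp_eq ν hα hβ,
    integral_exp_mul_sub_cosh ν (by positivity : (0:ℝ) < 2 * Real.sqrt (α * β))]

set_option maxHeartbeats 1000000 in
/-- Closed form for `E[Γ | Λ = λ]` in terms of modified Bessel functions of the
second kind. -/
theorem condMeanGamma_eq_besselK (τ a γbar μ σ lam : ℝ)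
    (hτ : 0 < τ) (ha : 0 < a) (hσ : 0 < σ) (hlam : lam ≠ γbar * a) :
    condMeanGamma τ a γbar μ σ lam
      = |lam - γbar * a| / Real.sqrt (2 * σ ^ 2 + μ ^ 2) *
          (besselK (τ * a + 1 / 2)
              (σ ^ (-2 : ℤ) * |lam - γbar * a| * Real.sqrt (2 * σ ^ 2 + μ ^ 2)) /
            besselK (τ * a - 1 / 2)
              (σ ^ (-2 : ℤ) * |lam - γbar * a| * Real.sqrt (2 * σ ^ 2 + μ ^ 2))) := by
  set c : ℝ := lam - γbar * a with hc_def
  have hc : c ≠ 0 := sub_ne_zero.2 hlam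
  have hσ2 : (0:ℝ) < σ ^ 2 := by positivity
  set α : ℝ := (2 * σ ^ 2 + μ ^ 2) / (2 * σ ^ 2) with hα_def
  set β : ℝ := c ^ 2 / (2 * σ ^ 2) with hβ_def
  have hα : 0 < α := by positivity
  have hβ : 0 < β := by positivity
  set K0 : ℝ := Real.exp (c * μ / σ ^ 2) / (Real.sqrt (2 * π * σ ^ 2) * Real.Gamma (τ * a))
    with hK0_def
  have hK0 : K0 ≠ 0 := by
    have hΓ : 0 < Real.Gamma (τ * a) := Real.Gamma_pos_of_pos (by positivity)
    have h2π : (0:ℝ) < 2 * π * σ ^ 2 := by positivity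
    positivity
  -- the Bessel argument
  have hzpow : (σ:ℝ) ^ (-2:ℤ) = (σ ^ 2)⁻¹ := by
    rw [zpow_neg]; norm_cast
  have h4 : Real.sqrt (α * β) = |c| * Real.sqrt (2 * σ ^ 2 + μ ^ 2) / (2 * σ ^ 2) := by
    rw [show α * β = (|c| * Real.sqrt (2 * σ ^ 2 + μ ^ 2) / (2 * σ ^ 2)) ^ 2 by
      rw [div_pow, mul_pow, sq_abs,
        Real.sq_sqrt (by positivity : (0:ℝ) ≤ 2 * σ ^ 2 + μ ^ 2), hα_def, hβ_def]
      field_simp]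
    exact Real.sqrt_sq (by positivity)
  have hX : 2 * Real.sqrt (α * β)
      = σ ^ (-2:ℤ) * |c| * Real.sqrt (2 * σ ^ 2 + μ ^ 2) := by
    rw [h4, hzpow]
    field_simp
  have hs₀ : Real.sqrt (β / α) = |c| / Real.sqrt (2 * σ ^ 2 + μ ^ 2) := by
    rw [show β / α = c ^ 2 / (2 * σ ^ 2 + μ ^ 2) by
      rw [hβ_def, hα_def]; field_simp,
      Real.sqrt_div (by positivity) _, Real.sqrt_sq_eq_abs]
  have hs₀pos : 0 < Real.sqrt (β / α) := Real.sqrt_pos.2 (div_pos hβ hα)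
  -- pointwise identity for the density
  have hjoint : ∀ g ∈ Ioi (0:ℝ), jointDensity τ a γbar μ σ lam g
      = K0 * (g ^ ((τ * a - 1/2) - 1) * Real.exp (-(α * g + β / g))) := by
    intro g hg
    have hg' : (0:ℝ) < g := hg
    rw [jointDensity]
    have h1 : Real.exp (-(lam - γbar * a - μ * g) ^ 2 / (2 * σ ^ 2 * g)) * Real.exp (-g)
        = Real.exp (c * μ / σ ^ 2) * Real.exp (-(α * g + β / g)) := by
      rw [← Real.exp_add, ← Real.exp_add]
      congr 1
      rw [hα_def, hβ_def, hc_def]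
      field_simp
      ring
    have h2 : Real.sqrt (2 * π * σ ^ 2 * g) = Real.sqrt (2 * π * σ ^ 2) * Real.sqrt g :=
      Real.sqrt_mul (by positivity) g
    have h3 : g ^ (τ * a - 1) / Real.sqrt g = g ^ ((τ * a - 1/2) - 1) := by
      rw [Real.sqrt_eq_rpow, ← Real.rpow_sub hg']
      congr 1
      ring
    rw [h2]
    rw [show Real.exp (-(lam - γbar * a - μ * g) ^ 2 / (2 * σ ^ 2 * g)) /
          (Real.sqrt (2 * π * σ ^ 2) * Real.sqrt g) *
        (g ^ (τ * a - 1) * Real.exp (-g) / Real.Gamma (τ * a))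
      = (Real.exp (-(lam - γbar * a - μ * g) ^ 2 / (2 * σ ^ 2 * g)) * Real.exp (-g)) *
        (g ^ (τ * a - 1) / Real.sqrt g) /
          (Real.sqrt (2 * π * σ ^ 2) * Real.Gamma (τ * a)) by ring, h1, h3, hK0_def]
    ring
  have hden : ∫ g in Ioi (0:ℝ), jointDensity τ a γbar μ σ lam g
      = K0 * (Real.sqrt (β / α) ^ (τ * a - 1/2)
          * (2 * besselK (τ * a - 1/2) (2 * Real.sqrt (α * β)))) := by
    rw [setIntegral_congr_fun measurableSet_Ioi hjoint, integral_const_mul,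
      master (τ * a - 1/2) hα hβ]
  have hnum : ∫ g in Ioi (0:ℝ), g * jointDensity τ a γbar μ σ lam g
      = K0 * (Real.sqrt (β / α) ^ (τ * a + 1/2)
          * (2 * besselK (τ * a + 1/2) (2 * Real.sqrt (α * β)))) := by
    have : ∀ g ∈ Ioi (0:ℝ), g * jointDensity τ a γbar μ σ lam g
        = K0 * (g ^ ((τ * a + 1/2) - 1) * Real.exp (-(α * g + β / g))) := by
      intro g hg
      have hg' : (0:ℝ) < g := hg
      rw [hjoint g hg,
        show (τ * a + 1/2) - 1 = 1 + ((τ * a - 1/2) - 1) by ring,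
        Real.rpow_add hg', Real.rpow_one]
      ring
    rw [setIntegral_congr_fun measurableSet_Ioi this, integral_const_mul,
      master (τ * a + 1/2) hα hβ]
  -- final algebra
  rw [condMeanGamma, hnum, hden, hX, hs₀]
  have hKpos : 0 < besselK (τ * a - 1/2) (σ ^ (-2:ℤ) * |c| * Real.sqrt (2 * σ ^ 2 + μ ^ 2)) := by
    refine besselK_pos _ ?_
    rw [← hX]; positivity
  have habs : (0:ℝ) < |c| := abs_pos.2 hc
  have hsq : (0:ℝ) < Real.sqrt (2 * σ ^ 2 + μ ^ 2) := Real.sqrt_pos.2 (by positivity)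
  rw [hs₀] at hs₀pos
  rw [show τ * a + 1/2 = (τ * a - 1/2) + 1 by ring,
    Real.rpow_add_one hs₀pos.ne' (τ * a - 1/2)]
  have hrpow : (0:ℝ) < (|c| / Real.sqrt (2 * σ ^ 2 + μ ^ 2)) ^ (τ * a - 1/2) :=
    Real.rpow_pos_of_pos hs₀pos _
  rw [mul_div_mul_left _ _ hK0]
  have halg : ∀ u v kp km : ℝ, v ≠ 0 → km ≠ 0 →
      v * u * (2 * kp) / (v * (2 * km)) = u * (kp / km) := by
    intro u v kp km hv hkm
    field_simp
  exact halg _ _ _ _ hrpow.ne' hKpos.ne'
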